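/- Let A, B be real symmetric positive definite n×n matrices. Then ρ²(A,B) := Tr(A) + Tr(B) − 2Tr(√(√A·B·√A)) equals the minimum of Tr(A) + Tr(B) − 2Tr(√A·U) over real matrices U subject to the block matrix [[B, Uᵀ],[U, I]] being positive semidefinite. -/

import Mathlib

open Matrix BigOperators

open Classical in
noncomputable def msqrt {n : ℕ} (M : Matrix (Fin n) (Fin n) ℝ) : Matrix (Fin n) (Fin n) ℝ :=
  if h : M.PosSemidef then h.1.eigenvectorUnitary.1 * diagonal ((↑) ∘ (√·) ∘ h.1.eigenvalues) *
    (star h.1.eigenvectorUnitary : Matrix (Fin n) (Fin n) ℝ) else 0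

noncomputable def fnorm {n : ℕ} (A : Matrix (Fin n) (Fin n) ℝ) : ℝ :=
  Real.sqrt (∑ i, ∑ j, (A i j) ^ 2)

lemma msqrt_posSemidef {n : ℕ} {M : Matrix (Fin n) (Fin n) ℝ} (h : M.PosSemidef) :
    (msqrt M).PosSemidef := by
  rw [msqrt, dif_pos h]
  have hd : (diagonal ((↑) ∘ (√·) ∘ h.1.eigenvalues : Fin n → ℝ)).PosSemidef := by
    rw [posSemidef_diagonal_iff]
    intro i
    exact Real.sqrt_nonneg _
  have := hd.mul_mul_conjTranspose_same h.1.eigenvectorUnitary.1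
  simpa [Unitary.coe_star, Matrix.star_eq_conjTranspose] using this

lemma msqrt_mul_self {n : ℕ} {M : Matrix (Fin n) (Fin n) ℝ} (h : M.PosSemidef) :
    msqrt M * msqrt M = M := by
  rw [msqrt, dif_pos h]
  have hU : (star h.1.eigenvectorUnitary : Matrix (Fin n) (Fin n) ℝ) * h.1.eigenvectorUnitary.1 = 1 :=
    Unitary.coe_star_mul_self _
  have hsp := h.1.spectral_theorem
  rw [Unitary.conjStarAlgAut_apply] at hsp
  calc _ = h.1.eigenvectorUnitary.1 * (diagonal ((↑) ∘ (√·) ∘ h.1.eigenvalues) *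
      ((star h.1.eigenvectorUnitary : Matrix (Fin n) (Fin n) ℝ) * h.1.eigenvectorUnitary.1) *
      diagonal ((↑) ∘ (√·) ∘ h.1.eigenvalues)) *
      (star h.1.eigenvectorUnitary : Matrix (Fin n) (Fin n) ℝ) := by
        simp only [Matrix.mul_assoc]
    _ = M := by
      rw [hU, Matrix.mul_one, diagonal_mul_diagonal]
      conv_rhs => rw [hsp]
      congr 3
      funext i
      simp [Real.mul_self_sqrt (h.eigenvalues_nonneg i)]

lemma my_trace_nonneg {n : ℕ} {P : Matrix (Fin n) (Fin n) ℝ} (hP : P.PosSemidef) :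
    0 ≤ P.trace := by
  exact hP.trace_nonneg

lemma my_trace_mul_nonneg {n : ℕ} {P Q : Matrix (Fin n) (Fin n) ℝ}
    (hP : P.PosSemidef) (hQ : Q.PosSemidef) : 0 ≤ (P * Q).trace := by
  have h1 : P * Q = msqrt P * (msqrt P * Q) := by
    rw [← Matrix.mul_assoc, msqrt_mul_self hP]
  rw [h1, Matrix.trace_mul_comm]
  have h2 := hQ.conjTranspose_mul_mul_same (msqrt P)
  rw [(msqrt_posSemidef hP).isHermitian.eq] at h2
  exact my_trace_nonneg h2

lemma my_aux {n : ℕ} (A B S T : Matrix (Fin n) (Fin n) ℝ)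
    (hA : A.PosDef) (hB : B.PosDef)
    (hS : S.PosSemidef) (hSS : S * S = A)
    (hT : T.PosSemidef) (hTT : T * T = S * B * S) :
    IsLeast {t : ℝ | ∃ U : Matrix (Fin n) (Fin n) ℝ,
        (Matrix.fromBlocks B Uᵀ U 1).PosSemidef ∧
        t = A.trace + B.trace - 2 * (S * U).trace}
      (A.trace + B.trace - 2 * T.trace) := by
  -- symmetry facts
  have hSt : Sᵀ = S := by
    rw [← conjTranspose_eq_transpose_of_trivial]; exact hS.isHermitian
  have hTt : Tᵀ = T := by
    rw [← conjTranspose_eq_transpose_of_trivial]; exact hT.isHermitian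
  have hBt : Bᵀ = B := by
    rw [← conjTranspose_eq_transpose_of_trivial]; exact hB.isHermitian
  -- invertibility
  have hSd : IsUnit S.det := by
    have h1 : S.det * S.det = A.det := by rw [← Matrix.det_mul, hSS]
    refine isUnit_iff_ne_zero.mpr fun h => ?_
    rw [h, zero_mul] at h1
    exact hA.det_pos.ne' h1.symm
  have hBd : IsUnit B.det := isUnit_iff_ne_zero.mpr hB.det_pos.ne'
  have hTd : IsUnit T.det := by
    have h1 : T.det * T.det = S.det * B.det * S.det := by
      rw [← Matrix.det_mul, hTT, Matrix.det_mul, Matrix.det_mul]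
    refine isUnit_iff_ne_zero.mpr fun h => ?_
    rw [h, zero_mul] at h1
    exact (mul_ne_zero (mul_ne_zero hSd.ne_zero hB.det_pos.ne') hSd.ne_zero) h1.symm
  haveI iS : Invertible S := S.invertibleOfIsUnitDet hSd
  haveI iB : Invertible B := B.invertibleOfIsUnitDet hBd
  haveI iT : Invertible T := T.invertibleOfIsUnitDet hTd
  have hSit : (S⁻¹)ᵀ = S⁻¹ := by rw [Matrix.transpose_nonsing_inv, hSt]
  have hTit : (T⁻¹)ᵀ = T⁻¹ := by rw [Matrix.transpose_nonsing_inv, hTt]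
  -- Schur complement characterization
  have schur : ∀ U : Matrix (Fin n) (Fin n) ℝ,
      (Matrix.fromBlocks B Uᵀ U 1).PosSemidef ↔ (B - Uᵀ * U).PosSemidef := by
    intro U
    haveI : Invertible (1 : Matrix (Fin n) (Fin n) ℝ) := invertibleOne
    have h1 := Matrix.PosDef.fromBlocks₂₂ B Uᵀ
      (Matrix.PosDef.one (n := Fin n) (R := ℝ))
    simp only [conjTranspose_eq_transpose_of_trivial, transpose_transpose,
      inv_one, Matrix.mul_one] at h1
    exact h1
  -- the key matrix identity for traces
  have hkeyR : T⁻¹ * (S * (B * S)) = T := by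
    rw [← Matrix.mul_assoc S B S, ← hTT, ← Matrix.mul_assoc,
      Matrix.inv_mul_of_invertible, Matrix.one_mul]
  have hkey : T⁻¹ * (S * B) * S = T := by
    simp only [Matrix.mul_assoc]; exact hkeyR
  constructor
  · -- membership: the optimal U
    refine ⟨T⁻¹ * (S * B), ?_, ?_⟩
    · rw [schur]
      have hUt : (T⁻¹ * (S * B))ᵀ = B * (S * T⁻¹) := by
        rw [Matrix.transpose_mul, Matrix.transpose_mul, hTit, hSt, hBt, Matrix.mul_assoc]
      have hTTinv : T⁻¹ * T⁻¹ = S⁻¹ * (B⁻¹ * S⁻¹) := by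
        calc T⁻¹ * T⁻¹ = (T * T)⁻¹ := (Matrix.mul_inv_rev T T).symm
          _ = (S * B * S)⁻¹ := by rw [hTT]
          _ = S⁻¹ * (B⁻¹ * S⁻¹) := by rw [Matrix.mul_inv_rev, Matrix.mul_inv_rev]
      have hval : (T⁻¹ * (S * B))ᵀ * (T⁻¹ * (S * B)) = B := by
        rw [hUt]
        calc B * (S * T⁻¹) * (T⁻¹ * (S * B))
            = B * (S * ((T⁻¹ * T⁻¹) * (S * B))) := by
              simp only [Matrix.mul_assoc]
          _ = B * (S * ((S⁻¹ * (B⁻¹ * S⁻¹)) * (S * B))) := by rw [hTTinv]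
          _ = B := by
              simp only [Matrix.mul_assoc, Matrix.mul_inv_cancel_left_of_invertible,
                Matrix.inv_mul_cancel_left_of_invertible, Matrix.mul_inv_of_invertible,
                Matrix.inv_mul_of_invertible, Matrix.mul_one, Matrix.one_mul]
      rw [hval, sub_self]
      exact Matrix.PosSemidef.zero
    · have : (S * (T⁻¹ * (S * B))).trace = T.trace := by
        rw [Matrix.trace_mul_comm, hkey]
      rw [this]
  · -- lower bound
    rintro t ⟨U, hUpsd, rfl⟩
    have hU : (B - Uᵀ * U).PosSemidef := (schur U).mp hUpsd
    have htr : (S * U).trace ≤ T.trace := by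
      set G : Matrix (Fin n) (Fin n) ℝ := S * T⁻¹ * S with hGdef
      have hG : G.PosSemidef := by
        have h1 := (hT.inv).conjTranspose_mul_mul_same S
        rwa [hS.isHermitian.eq] at h1
      set W : Matrix (Fin n) (Fin n) ℝ := T * S⁻¹ with hWdef
      have hWt : Wᵀ = S⁻¹ * T := by
        rw [hWdef, Matrix.transpose_mul, hSit, hTt]
      -- three product identities
      have e1 : U * G * Wᵀ = U * S := by
        rw [hWt, hGdef]
        simp only [Matrix.mul_assoc, Matrix.mul_inv_cancel_left_of_invertible,
          Matrix.inv_mul_cancel_left_of_invertible, Matrix.mul_inv_of_invertible,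
          Matrix.inv_mul_of_invertible, Matrix.mul_one, Matrix.one_mul]
      have e2 : W * G * Uᵀ = S * Uᵀ := by
        rw [hWdef, hGdef]
        simp only [Matrix.mul_assoc, Matrix.mul_inv_cancel_left_of_invertible,
          Matrix.inv_mul_cancel_left_of_invertible, Matrix.mul_inv_of_invertible,
          Matrix.inv_mul_of_invertible, Matrix.mul_one, Matrix.one_mul]
      have e3 : W * G * Wᵀ = T := by
        rw [hWdef, hGdef, hWt]
        simp only [Matrix.mul_assoc, Matrix.mul_inv_cancel_left_of_invertible,
          Matrix.inv_mul_cancel_left_of_invertible, Matrix.mul_inv_of_invertible,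
          Matrix.inv_mul_of_invertible, Matrix.mul_one, Matrix.one_mul]
      -- expansion and positivity
      have hDpsd : ((U - W) * G * (U - W)ᵀ).PosSemidef := by
        have h1 := hG.mul_mul_conjTranspose_same (U - W)
        rwa [conjTranspose_eq_transpose_of_trivial] at h1
      have hexp : (U - W) * G * (U - W)ᵀ
          = U * G * Uᵀ - W * G * Uᵀ - (U * G * Wᵀ - W * G * Wᵀ) := by
        rw [Matrix.transpose_sub]
        simp only [Matrix.sub_mul, Matrix.mul_sub]
      have h0 : 0 ≤ (U * G * Uᵀ).trace - (S * Uᵀ).trace - ((U * S).trace - T.trace) := by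
        have := my_trace_nonneg hDpsd
        rwa [hexp, Matrix.trace_sub, Matrix.trace_sub, Matrix.trace_sub,
          e1, e2, e3] at this
      have t1 : (U * G * Uᵀ).trace = (G * (Uᵀ * U)).trace := by
        rw [Matrix.mul_assoc, Matrix.trace_mul_comm, Matrix.mul_assoc]
      have t2 : (G * (Uᵀ * U)).trace ≤ (G * B).trace := by
        have h1 := my_trace_mul_nonneg hG hU
        rw [Matrix.mul_sub, Matrix.trace_sub] at h1
        linarith
      have t3 : (G * B).trace = T.trace := by
        rw [hGdef,
          show S * T⁻¹ * S * B = S * (T⁻¹ * (S * B)) from by simp only [Matrix.mul_assoc],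
          Matrix.trace_mul_comm, hkey]
      have t4 : (U * S).trace = (S * U).trace := Matrix.trace_mul_comm U S
      have t5 : (S * Uᵀ).trace = (S * U).trace := by
        rw [← Matrix.trace_transpose (S * Uᵀ), Matrix.transpose_mul,
          transpose_transpose, hSt, Matrix.trace_mul_comm]
      linarith
    linarith

theorem stmt_8 {n : ℕ} (A B : Matrix (Fin n) (Fin n) ℝ)
    (hA : A.PosDef) (hB : B.PosDef) :
    IsLeast {t : ℝ | ∃ U : Matrix (Fin n) (Fin n) ℝ,
        (Matrix.fromBlocks B Uᵀ U 1).PosSemidef ∧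
        t = A.trace + B.trace - 2 * (msqrt A * U).trace}
      (A.trace + B.trace - 2 * (msqrt (msqrt A * B * msqrt A)).trace) := by
  have hAp : A.PosSemidef := hA.posSemidef
  have hS : (msqrt A).PosSemidef := msqrt_posSemidef hAp
  have hSS : msqrt A * msqrt A = A := msqrt_mul_self hAp
  have hM : (msqrt A * B * msqrt A).PosSemidef := by
    have h1 := hB.posSemidef.conjTranspose_mul_mul_same (msqrt A)
    rwa [hS.isHermitian.eq] at h1
  have hT : (msqrt (msqrt A * B * msqrt A)).PosSemidef := by
    exact msqrt_posSemidef hM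
  have hTT : msqrt (msqrt A * B * msqrt A) * msqrt (msqrt A * B * msqrt A)
      = msqrt A * B * msqrt A := by exact msqrt_mul_self hM
  exact my_aux A B (msqrt A) (msqrt (msqrt A * B * msqrt A)) hA hB hS hSS hT hTT
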